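/- For every perfect square n, there exists a bipartite graph on 2n vertices with exactly n^{3/2} edges whose edge set is a disjoint union of n matchings such that any two distinct edges belonging to the same matching lie in different connected components of the graph (hence the matchings are l-separated for every l). -/

import Mathlib

/-- The bipartite graph on `Fin n ⊕ Fin n` determined by a family of edge sets
`E i ⊆ Fin n × Fin n`. -/
def bipGraph {n : ℕ} (E : Fin n → Finset (Fin n × Fin n)) :
    SimpleGraph (Fin n ⊕ Fin n) where
  Adj u v :=
    match u, v with
    | Sum.inl x, Sum.inr y => ∃ i, (x, y) ∈ E i
    | Sum.inr y, Sum.inl x => ∃ i, (x, y) ∈ E i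
    | _, _ => False
  symm := ⟨by rintro (x | x) (y | y) h <;> simp_all⟩
  loopless := ⟨by rintro (x | x) h <;> simp_all⟩

/-- For every perfect square `n = m²`, there is a bipartite graph on `2n`
vertices with exactly `n^(3/2) = m³` edges whose edge set is a disjoint union of
`n` matchings such that any two distinct edges of the same matching lie in
different connected components (hence the matchings are `l`-separated for all `l`). -/
theorem perfect_square_construction (n m : ℕ) (hn : 0 < n) (hm : n = m ^ 2) :
    ∃ E : Fin n → Finset (Fin n × Fin n),
      (∀ i j, i ≠ j → Disjoint (E i) (E j)) ∧
      (∀ i, ∀ e ∈ E i, ∀ e' ∈ E i, (e.1 = e'.1 ∨ e.2 = e'.2) → e = e') ∧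
      (∑ i, (E i).card = m ^ 3) ∧
      (∀ i, ∀ e ∈ E i, ∀ e' ∈ E i, e ≠ e' →
        ¬ (bipGraph E).Reachable (Sum.inl e.1) (Sum.inl e'.1)) := by
  subst hm
  -- decode `Fin (m^2)` as a pair (block, position)
  set d : Fin (m ^ 2) ≃ Fin m × Fin m :=
    (finCongr (by ring : m ^ 2 = m * m)).trans finProdFinEquiv.symm with hd
  set E : Fin (m ^ 2) → Finset (Fin (m ^ 2) × Fin (m ^ 2)) :=
    fun i => Finset.univ.image
      (fun b : Fin m => (d.symm (b, (d i).1), d.symm (b, (d i).2))) with hE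
  have hmem : ∀ i e, e ∈ E i ↔
      ∃ b : Fin m, (d.symm (b, (d i).1), d.symm (b, (d i).2)) = e := by
    intro i e
    simp [hE, Finset.mem_image]
  refine ⟨E, ?_, ?_, ?_, ?_⟩
  · -- disjointness
    intro i j hij
    rw [Finset.disjoint_left]
    intro e hei hej
    obtain ⟨b, hb⟩ := (hmem i e).1 hei
    obtain ⟨c, hc⟩ := (hmem j e).1 hej
    apply hij
    rw [← hb] at hc
    have h1 := congrArg (fun p => d p.1) hc
    have h2 := congrArg (fun p => d p.2) hc
    simp only [Equiv.apply_symm_apply] at h1 h2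
    have : d i = d j := by
      rw [Prod.ext_iff] at h1 h2 ⊢
      exact ⟨h1.2.symm, h2.2.symm⟩
    exact d.injective this
  · -- matching property
    intro i e hei e' hei' h
    obtain ⟨b, hb⟩ := (hmem i e).1 hei
    obtain ⟨c, hc⟩ := (hmem i e').1 hei'
    subst hb; subst hc
    have hbc : b = c := by
      rcases h with h | h
      · simpa using congrArg (fun x => (d x).1) h
      · simpa using congrArg (fun x => (d x).1) h
    rw [hbc]
  · -- edge count
    have hcard : ∀ i, (E i).card = m := by
      intro i
      rw [hE]
      rw [Finset.card_image_of_injective _ ?_, Finset.card_univ, Fintype.card_fin]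
      intro b c h
      have := congrArg (fun p => (d p.1).1) h
      simpa using this
    simp only [hcard, Finset.sum_const, Finset.card_univ, Fintype.card_fin,
      smul_eq_mul]
    ring
  · -- separation
    intro i e hei e' hei' hne hr
    obtain ⟨b, hb⟩ := (hmem i e).1 hei
    obtain ⟨c, hc⟩ := (hmem i e').1 hei'
    have hbc : b ≠ c := fun h => hne (by rw [← hb, ← hc, h])
    -- block function invariant under adjacency
    set blk : Fin (m ^ 2) ⊕ Fin (m ^ 2) → Fin m :=
      Sum.elim (fun x => (d x).1) (fun y => (d y).1) with hblk
    have hadj : ∀ u v, (bipGraph E).Adj u v → blk u = blk v := by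
      rintro (x | x) (y | y) h
      · cases h
      · obtain ⟨j, hj⟩ := h
        obtain ⟨a, ha⟩ := (hmem j _).1 hj
        have h1 := congrArg (fun p => (d p.1).1) ha
        have h2 := congrArg (fun p => (d p.2).1) ha
        simp only [Equiv.apply_symm_apply] at h1 h2
        simp [hblk, ← h1, ← h2]
      · obtain ⟨j, hj⟩ := h
        obtain ⟨a, ha⟩ := (hmem j _).1 hj
        have h1 := congrArg (fun p => (d p.1).1) ha
        have h2 := congrArg (fun p => (d p.2).1) ha
        simp only [Equiv.apply_symm_apply] at h1 h2
        simp [hblk, ← h1, ← h2]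
      · cases h
    have hreach : ∀ u v, (bipGraph E).Walk u v → blk u = blk v := by
      intro u v w
      induction w with
      | nil => rfl
      | cons h w ih => exact (hadj _ _ h).trans ih
    have hwalk : blk (Sum.inl e.1) = blk (Sum.inl e'.1) := hreach _ _ hr.some
    apply hbc
    have h1 : (d e.1).1 = b := by rw [← hb]; simp
    have h2 : (d e'.1).1 = c := by rw [← hc]; simp
    rw [← h1, ← h2]
    exact hwalk
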